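/- arXiv:2506.13998 — 2 statements merged into one kernel-verified Lean document; each statement's English description precedes it below -/
import Mathlib

section
/- Let f and D be natural numbers, Q a finite set with |Q| = 2f + 1, and B ⊆ Q with |B| ≤ f. Then the number of D-element subsets of Q that are contained in B, multiplied by 2^D, is at most the total number of D-element subsets of Q; equivalently, |{S ∈ powersetCard D Q : S ⊆ B}| · 2^D ≤ |powersetCard D Q|. -/
lemma two_pow_descFactorial (D f : ℕ) :
    2 ^ D * Nat.descFactorial f D ≤ Nat.descFactorial (2 * f + 1) D := by
  induction D with
  | zero => simp
  | succ D ih =>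
    rw [Nat.descFactorial_succ, Nat.descFactorial_succ, pow_succ]
    calc 2 ^ D * 2 * ((f - D) * Nat.descFactorial f D)
        = (2 * (f - D)) * (2 ^ D * Nat.descFactorial f D) := by ring
      _ ≤ (2 * f + 1 - D) * Nat.descFactorial (2 * f + 1) D :=
          Nat.mul_le_mul (by omega) ih

lemma two_pow_choose (D f : ℕ) :
    2 ^ D * Nat.choose f D ≤ Nat.choose (2 * f + 1) D := by
  have h := two_pow_descFactorial D f
  rw [Nat.descFactorial_eq_factorial_mul_choose, Nat.descFactorial_eq_factorial_mul_choose] at h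
  have := Nat.factorial_pos D
  calc 2 ^ D * Nat.choose f D
      = ((Nat.factorial D) * (2 ^ D * Nat.choose f D)) / (Nat.factorial D) := by
        rw [Nat.mul_div_cancel_left _ this]
    _ ≤ ((Nat.factorial D) * Nat.choose (2 * f + 1) D) / (Nat.factorial D) := by
        apply Nat.div_le_div_right; rw [Nat.mul_left_comm] at h; exact h
    _ = Nat.choose (2 * f + 1) D := Nat.mul_div_cancel_left _ this

theorem bad_samples_fraction {α : Type*} [DecidableEq α] (f D : ℕ)
    (Q B : Finset α) (hQ : Q.card = 2 * f + 1) (hBQ : B ⊆ Q) (hB : B.card ≤ f) :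
    ((Q.powersetCard D).filter (fun S => S ⊆ B)).card * 2 ^ D ≤
      (Q.powersetCard D).card := by
  have hfilter : (Q.powersetCard D).filter (fun S => S ⊆ B) = B.powersetCard D := by
    ext S
    simp only [Finset.mem_filter, Finset.mem_powersetCard]
    constructor
    · rintro ⟨⟨_, hc⟩, hb⟩; exact ⟨hb, hc⟩
    · rintro ⟨hb, hc⟩; exact ⟨⟨hb.trans hBQ, hc⟩, hb⟩
  rw [hfilter, Finset.card_powersetCard, Finset.card_powersetCard, hQ, mul_comm]
  exact le_trans (Nat.mul_le_mul_left _ (Nat.choose_le_choose D hB)) (two_pow_choose D f)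
end

section
/- Let f and D be natural numbers, Q a finite set with |Q| = 2f + 1, B ⊆ Q with |B| ≤ f, and suppose the family of D-element subsets of Q is nonempty (i.e., D ≤ 2f + 1). Under the uniform probability distribution on the D-element subsets of Q, the probability of the event that the chosen subset is contained in B is at most (1/2)^D. -/
open scoped ENNReal

lemma desc_le (f : ℕ) : ∀ D, 2 ^ D * Nat.descFactorial f D ≤ Nat.descFactorial (2 * f + 1) D
  | 0 => by simp
  | D + 1 => by
    rw [Nat.descFactorial_succ, Nat.descFactorial_succ, pow_succ]
    calc 2 ^ D * 2 * ((f - D) * Nat.descFactorial f D)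
        = (2 * (f - D)) * (2 ^ D * Nat.descFactorial f D) := by ring
      _ ≤ (2 * f + 1 - D) * Nat.descFactorial (2 * f + 1) D :=
          Nat.mul_le_mul (by omega) (desc_le f D)

lemma choose_le (f D : ℕ) : 2 ^ D * Nat.choose f D ≤ Nat.choose (2 * f + 1) D := by
  have h := desc_le f D
  rw [Nat.descFactorial_eq_factorial_mul_choose, Nat.descFactorial_eq_factorial_mul_choose] at h
  have := Nat.factorial_pos D
  have h2 : 2 ^ D * Nat.choose f D * D.factorial ≤ Nat.choose (2 * f + 1) D * D.factorial := by
    calc 2 ^ D * Nat.choose f D * D.factorial = 2 ^ D * (D.factorial * Nat.choose f D) := by ring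
      _ ≤ D.factorial * Nat.choose (2 * f + 1) D := h
      _ = Nat.choose (2 * f + 1) D * D.factorial := by ring
  exact Nat.le_of_mul_le_mul_right h2 (by omega)

theorem bad_sample_probability {α : Type*} [DecidableEq α] (f D : ℕ)
    (Q B : Finset α) (hQ : Q.card = 2 * f + 1) (hBQ : B ⊆ Q) (hB : B.card ≤ f)
    (hne : (Q.powersetCard D).Nonempty) :
    (PMF.uniformOfFinset (Q.powersetCard D) hne).toOuterMeasure
      {S : Finset α | S ⊆ B} ≤ (1 / 2) ^ D := by
  rw [PMF.toOuterMeasure_uniformOfFinset_apply]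
  have hfilter : (Q.powersetCard D).filter (· ∈ {S : Finset α | S ⊆ B}) = B.powersetCard D := by
    ext S
    simp only [Finset.mem_filter, Finset.mem_powersetCard, Set.mem_setOf_eq]
    exact ⟨fun ⟨⟨_, hc⟩, hSB⟩ => ⟨hSB, hc⟩, fun ⟨hSB, hc⟩ => ⟨⟨hSB.trans hBQ, hc⟩, hSB⟩⟩
  rw [Finset.filter_congr_decidable] at hfilter ⊢
  rw [hfilter, Finset.card_powersetCard, Finset.card_powersetCard, hQ]
  have hDQ : D ≤ 2 * f + 1 := by
    obtain ⟨S, hS⟩ := hne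
    rw [Finset.mem_powersetCard] at hS
    calc D = S.card := hS.2.symm
      _ ≤ Q.card := Finset.card_le_card hS.1
      _ = 2 * f + 1 := hQ
  have hpos : 0 < Nat.choose (2 * f + 1) D := Nat.choose_pos hDQ
  have hkey : (B.card.choose D : ℕ) * 2 ^ D ≤ (2 * f + 1).choose D := by
    calc B.card.choose D * 2 ^ D = 2 ^ D * B.card.choose D := by ring
      _ ≤ 2 ^ D * f.choose D := Nat.mul_le_mul_left _ (Nat.choose_le_choose D hB)
      _ ≤ (2 * f + 1).choose D := choose_le f D
  rw [ENNReal.div_le_iff (by exact_mod_cast hpos.ne') (by simp)]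
  rw [one_div, ← ENNReal.inv_pow, ← ENNReal.div_eq_inv_mul,
    ENNReal.le_div_iff_mul_le (by simp [pow_ne_zero]) (by simp)]
  calc (B.card.choose D : ℝ≥0∞) * 2 ^ D = ((B.card.choose D * 2 ^ D : ℕ) : ℝ≥0∞) := by push_cast; ring
    _ ≤ ((2 * f + 1).choose D : ℝ≥0∞) := by exact_mod_cast hkey
end
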